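/- Let A be an associative (possibly noncommutative) algebra over a field of characteristic zero, Δ : A → A a linear map, and e ∈ A a fixed element. For a ∈ A let L_a, R_a denote left and right multiplication. If the image of Δ lies in the center of A, then defining Φ_Δ^n(a,…,a) := [[…[Δ, L_a],…], L_a] e (n nested commutators in End(A)), one has the recursion Φ_Δ^{n+1}(a^{⊙(n+1)}) = Φ_Δ^n(a^{⊙(n-1)} ⊙ (a·a)) − 2 Φ_Δ^n(a^{⊙ n}) · a for all n ≥ 1, where Φ_Δ^n(a^{⊙(n-1)} ⊙ (a·a)) is interpreted via the nested-commutator formula with one L_a replaced by L_{a·a}. -/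

import Mathlib

/-- Iterated commutator with left multiplication: `nestIter a T n` is the
endomorphism `[[…[T, L_a],…], L_a]` with `n` commutators. -/
noncomputable def nestIter {K : Type*} [Field K] {A : Type*} [Ring A] [Algebra K A]
    (a : A) (T : Module.End K A) (n : ℕ) : Module.End K A :=
  (fun S : Module.End K A => ⁅S, (LinearMap.mulLeft K a : Module.End K A)⁆)^[n] T

section aux
variable {K : Type*} [Field K] {A : Type*} [Ring A] [Algebra K A] (a : A)

lemma nest_zero (T : Module.End K A) : nestIter a T 0 = T := rfl

lemma nest_succ' (T : Module.End K A) (k : ℕ) :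
    nestIter a T (k + 1) = ⁅nestIter a T k, (LinearMap.mulLeft K a : Module.End K A)⁆ :=
  Function.iterate_succ_apply' _ _ _

lemma nest_succ (T : Module.End K A) (k : ℕ) :
    nestIter a T (k + 1) = nestIter a ⁅T, (LinearMap.mulLeft K a : Module.End K A)⁆ k :=
  Function.iterate_succ_apply _ _ _

lemma nest_sub (S T : Module.End K A) (k : ℕ) :
    nestIter a (S - T) k = nestIter a S k - nestIter a T k := by
  induction k with
  | zero => rfl
  | succ k ih =>
    simp [nest_succ', ih, sub_lie]
    simp only [Ring.lie_def, sub_mul, mul_sub]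
    abel

lemma nest_smul (T : Module.End K A) (k : ℕ) (c : ℕ) :
    nestIter a (c • T) k = c • nestIter a T k := by
  induction k with
  | zero => rfl
  | succ k ih =>
    simp only [nest_succ', ih, Ring.lie_def, smul_mul_assoc, mul_smul_comm, smul_sub]

lemma nest_mulLeft (T : Module.End K A) (k : ℕ) :
    nestIter a ((LinearMap.mulLeft K a : Module.End K A) * T) k
      = (LinearMap.mulLeft K a : Module.End K A) * nestIter a T k := by
  induction k with
  | zero => rfl
  | succ k ih =>
    simp only [nest_succ', ih, Ring.lie_def, mul_assoc, mul_sub]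

lemma nest_comm (D : Module.End K A) (hD : ∀ x : A, D x ∈ Set.center A) (k : ℕ) :
    ∀ x : A, a * nestIter a D k x = nestIter a D k x * a := by
  induction k with
  | zero => intro x; exact ((Set.mem_center_iff.mp (hD x)).comm a).symm
  | succ k ih =>
    intro x
    have h1 : nestIter a D (k + 1) x
        = nestIter a D k (a * x) - a * nestIter a D k x := by
      rw [nest_succ']
      simp [Ring.lie_def, LinearMap.mulLeft_apply]
    rw [h1]
    rw [mul_sub, sub_mul, ih (a * x), ih x]
    rw [← mul_assoc, ih x]

end aux

/-- Recursion for the Koszul brackets in the intermediate case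
`Im Δ ⊆ Z(A)`: for `n ≥ 1`,
`Φ_Δ^{n+1}(a^{⊙(n+1)}) = Φ_Δ^n(a^{⊙(n-1)} ⊙ (a·a)) − 2 Φ_Δ^n(a^{⊙n})·a`,
where `Φ_Δ^n(a^{⊙n}) = [[…[Δ, L_a],…], L_a] e` with `n` nested commutators,
and the insertion of `a·a` is realized by replacing the innermost `L_a`
by `L_{a·a}`. -/
theorem stmt_12 {K : Type*} [Field K] [CharZero K] {A : Type*} [Ring A] [Algebra K A]
    (D : Module.End K A) (e a : A)
    (hD : ∀ x : A, D x ∈ Set.center A) (n : ℕ) (hn : 1 ≤ n) :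
    nestIter a D (n + 1) e =
      nestIter a ⁅D, (LinearMap.mulLeft K (a * a) : Module.End K A)⁆ (n - 1) e
        - (2 : ℕ) • (nestIter a D n e * a) := by
  obtain ⟨m, rfl⟩ : ∃ m, n = m + 1 := ⟨n - 1, (Nat.succ_pred_eq_of_pos hn).symm⟩
  set L : Module.End K A := LinearMap.mulLeft K a with hL
  have key : ⁅⁅D, L⁆, L⁆ =
      ⁅D, (LinearMap.mulLeft K (a * a) : Module.End K A)⁆ - (2 : ℕ) • (L * ⁅D, L⁆) := by
    rw [LinearMap.mulLeft_mul]
    show ⁅⁅D, L⁆, L⁆ = ⁅D, L * L⁆ - (2 : ℕ) • (L * ⁅D, L⁆)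
    simp only [Ring.lie_def, two_smul]
    simp only [sub_mul, mul_sub, mul_assoc]
    abel
  have h2 : nestIter a D (m + 1 + 1) = nestIter a ⁅⁅D, L⁆, L⁆ m := by
    rw [nest_succ, nest_succ]
  rw [h2, key, nest_sub, nest_smul, nest_mulLeft]
  have h3 : nestIter a D (m + 1) = nestIter a ⁅D, L⁆ m := nest_succ a D m
  simp only [Nat.add_sub_cancel, LinearMap.sub_apply, LinearMap.smul_apply,
    Module.End.mul_apply, LinearMap.mulLeft_apply, ← h3]
  rw [nest_comm a D hD (m + 1) e]
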